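/- Every element of the group L(p̄) can be written uniquely in the form l₀·c + Σᵢ lᵢ·xᵢ with l₀ ∈ ℤ and integers lᵢ satisfying 0 ≤ lᵢ < pᵢ for each i. -/

import Mathlib

open FreeAbelianGroup

/-- The relation subgroup of the free abelian group on `Fin (n+1)` generated by the
elements `pᵢ • xᵢ - p₀ • x₀` (the relations `pᵢxᵢ = p₁x₁`). -/
def relSubgroup (n : ℕ) (p : Fin (n + 1) → ℕ) : AddSubgroup (FreeAbelianGroup (Fin (n + 1))) :=
  AddSubgroup.closure {g | ∃ i : Fin (n + 1), g = (p i : ℤ) • of i - (p 0 : ℤ) • of 0}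

/-- `L(p̄)`, the abelian group generated by `x₁, …, xₙ` modulo `pᵢxᵢ = p₁x₁`. -/
def Lgroup (n : ℕ) (p : Fin (n + 1) → ℕ) : Type :=
  FreeAbelianGroup (Fin (n + 1)) ⧸ relSubgroup n p

instance (n : ℕ) (p : Fin (n + 1) → ℕ) : AddCommGroup (Lgroup n p) :=
  QuotientAddGroup.Quotient.addCommGroup _

/-- The image of `xᵢ` in `L(p̄)`. -/
def Lx (n : ℕ) (p : Fin (n + 1) → ℕ) (i : Fin (n + 1)) : Lgroup n p :=
  QuotientAddGroup.mk (of i)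

/-- The element `c = p₁x₁` of `L(p̄)`. -/
def Lc (n : ℕ) (p : Fin (n + 1) → ℕ) : Lgroup n p := (p 0 : ℤ) • Lx n p 0

section aux

variable {n : ℕ} {p : Fin (n + 1) → ℕ}

/-- Lift a map on generators satisfying the relations to a hom on `Lgroup`. -/
noncomputable def Lhom {A : Type*} [AddCommGroup A] (f : Fin (n + 1) → A)
    (hf : ∀ i, (p i : ℤ) • f i = (p 0 : ℤ) • f 0) : Lgroup n p →+ A :=
  QuotientAddGroup.lift (relSubgroup n p) (FreeAbelianGroup.lift f) (by
    rw [relSubgroup, AddSubgroup.closure_le]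
    rintro g ⟨i, rfl⟩
    simp only [SetLike.mem_coe, AddMonoidHom.mem_ker, map_sub, map_zsmul, lift_apply_of, hf i, sub_self])

@[simp] lemma Lhom_Lx {A : Type*} [AddCommGroup A] (f : Fin (n + 1) → A)
    (hf : ∀ i, (p i : ℤ) • f i = (p 0 : ℤ) • f 0) (i : Fin (n + 1)) :
    Lhom f hf (Lx n p i) = f i := by
  show FreeAbelianGroup.lift f (of i) = f i
  exact lift_apply_of f i

@[simp] lemma Lhom_Lc {A : Type*} [AddCommGroup A] (f : Fin (n + 1) → A)
    (hf : ∀ i, (p i : ℤ) • f i = (p 0 : ℤ) • f 0) :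
    Lhom f hf (Lc n p) = (p 0 : ℤ) • f 0 := by
  rw [Lc, map_zsmul, Lhom_Lx]

lemma smul_Lx (i : Fin (n + 1)) : (p i : ℤ) • Lx n p i = Lc n p := by
  show (p i : ℤ) • (QuotientAddGroup.mk (of i) : FreeAbelianGroup (Fin (n + 1)) ⧸ relSubgroup n p)
    = (p 0 : ℤ) • (QuotientAddGroup.mk (of 0) : FreeAbelianGroup (Fin (n + 1)) ⧸ relSubgroup n p)
  rw [← QuotientAddGroup.mk_zsmul, ← QuotientAddGroup.mk_zsmul,
    QuotientAddGroup.eq_iff_sub_mem]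
  exact AddSubgroup.subset_closure ⟨i, rfl⟩

lemma Lx_span (y : Lgroup n p) : ∃ a : Fin (n + 1) → ℤ, y = ∑ i, a i • Lx n p i := by
  induction y using QuotientAddGroup.induction_on with
  | H z =>
  induction z using FreeAbelianGroup.induction_on with
  | zero => exact ⟨0, by simp; rfl⟩
  | of i => exact ⟨Pi.single i 1, by simp [Pi.single_apply]; rfl⟩
  | neg i _ =>
    refine ⟨-Pi.single i 1, ?_⟩
    show (QuotientAddGroup.mk' (relSubgroup n p)) (-of i) = _
    rw [map_neg]
    simp [Pi.single_apply, QuotientAddGroup.mk'_apply]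
    rfl
  | add w v hw hv =>
    obtain ⟨a, ha⟩ := hw
    obtain ⟨b, hb⟩ := hv
    refine ⟨a + b, ?_⟩
    show (QuotientAddGroup.mk' (relSubgroup n p)) (w + v) = _
    rw [map_add]
    simp only [Pi.add_apply, add_smul, Finset.sum_add_distrib, QuotientAddGroup.mk'_apply]
    rw [← ha, ← hb]
    rfl

lemma normal_form_unique (hp : ∀ i, 0 < p i) (q q' : ℤ × (Fin (n + 1) → ℤ))
    (hq : ∀ i, 0 ≤ q.2 i ∧ q.2 i < (p i : ℤ)) (hq' : ∀ i, 0 ≤ q'.2 i ∧ q'.2 i < (p i : ℤ))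
    (h : q.1 • Lc n p + ∑ i, q.2 i • Lx n p i = q'.1 • Lc n p + ∑ i, q'.2 i • Lx n p i) :
    q = q' := by
  -- Step 1: coordinates away from 0 agree, via maps to `ZMod (p j)`.
  have step1 : ∀ j : Fin (n + 1), j ≠ 0 → q.2 j = q'.2 j := by
    intro j hj
    have hj0 : ¬ ((0 : Fin (n + 1)) = j) := fun e => hj e.symm
    set f : Fin (n + 1) → ZMod (p j) := fun i => if i = j then 1 else 0 with hfdef
    have hf : ∀ i, (p i : ℤ) • f i = (p 0 : ℤ) • f 0 := by
      intro i
      by_cases hij : i = j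
      · subst hij
        simp [f, hj0, zsmul_eq_mul, ZMod.natCast_self]
      · simp [f, hij, hj0]
    have hcongr := congrArg (Lhom f hf) h
    simp only [map_add, map_zsmul, map_sum, Lhom_Lc, Lhom_Lx, hfdef, smul_ite, smul_zero,
      Finset.sum_ite_eq', Finset.mem_univ, if_true, hj0, if_false] at hcongr
    have hcast : ((q.2 j : ℤ) : ZMod (p j)) = ((q'.2 j : ℤ) : ZMod (p j)) := by
      simpa [zsmul_eq_mul] using hcongr
    have hmod := (ZMod.intCast_eq_intCast_iff' _ _ _).mp hcast
    have e1 : q.2 j % (p j : ℤ) = q.2 j := Int.emod_eq_of_lt (hq j).1 (hq j).2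
    have e2 : q'.2 j % (p j : ℤ) = q'.2 j := Int.emod_eq_of_lt (hq' j).1 (hq' j).2
    rw [← e1, ← e2]
    exact hmod
  -- Step 2: the remaining coordinates, via a map to ℤ.
  set g : Fin (n + 1) → ℤ := fun i => ∏ k ∈ Finset.univ.erase i, (p k : ℤ) with hgdef
  have hg : ∀ i, (p i : ℤ) • g i = (p 0 : ℤ) • g 0 := by
    intro i
    have key : ∀ j : Fin (n + 1), (p j : ℤ) * ∏ k ∈ Finset.univ.erase j, (p k : ℤ)
        = ∏ k, (p k : ℤ) := fun j => Finset.mul_prod_erase Finset.univ (fun k => ((p k : ℕ) : ℤ)) (Finset.mem_univ j)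
    simp only [hgdef, smul_eq_mul]
    rw [key i, key 0]
  have hg0pos : 0 < g 0 := by
    refine Finset.prod_pos fun k _ => ?_
    exact_mod_cast hp k
  have hcongr := congrArg (Lhom g hg) h
  simp only [map_add, map_zsmul, map_sum, Lhom_Lc, Lhom_Lx] at hcongr
  rw [← Finset.add_sum_erase _ _ (Finset.mem_univ 0),
    ← Finset.add_sum_erase _ (fun i => q'.2 i • g i) (Finset.mem_univ 0)] at hcongr
  have hsum : ∑ i ∈ Finset.univ.erase 0, q.2 i • g i
      = ∑ i ∈ Finset.univ.erase 0, q'.2 i • g i := by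
    refine Finset.sum_congr rfl fun i hi => ?_
    rw [step1 i (Finset.ne_of_mem_erase hi)]
  rw [hsum] at hcongr
  have hkey : q.2 0 + (p 0 : ℤ) * q.1 = q'.2 0 + (p 0 : ℤ) * q'.1 := by
    have h2 : (q.2 0 + (p 0 : ℤ) * q.1) * g 0 = (q'.2 0 + (p 0 : ℤ) * q'.1) * g 0 := by
      simp only [smul_eq_mul] at hcongr
      linear_combination hcongr
    exact mul_right_cancel₀ hg0pos.ne' h2
  have h0 : q.2 0 = q'.2 0 := by
    have := congrArg (· % (p 0 : ℤ)) hkey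
    simpa [Int.add_mul_emod_self_left, Int.emod_eq_of_lt (hq 0).1 (hq 0).2,
      Int.emod_eq_of_lt (hq' 0).1 (hq' 0).2] using this
  have h1 : q.1 = q'.1 := by
    have hp0 : (p 0 : ℤ) ≠ 0 := by exact_mod_cast (hp 0).ne'
    have := congrArg (· / (p 0 : ℤ)) hkey
    simp only [Int.add_mul_ediv_left _ _ hp0] at this
    rwa [Int.ediv_eq_zero_of_lt (hq 0).1 (hq 0).2,
      Int.ediv_eq_zero_of_lt (hq' 0).1 (hq' 0).2, zero_add, zero_add] at this
  have h2 : q.2 = q'.2 := by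
    funext i
    by_cases hi : i = 0
    · rw [hi]; exact h0
    · exact step1 i hi
  exact Prod.ext h1 h2

end aux

/-- Every element of `L(p̄)` is uniquely `l₀ • c + ∑ᵢ lᵢ • xᵢ` with `0 ≤ lᵢ < pᵢ`. -/
theorem Lgroup_normal_form (n : ℕ) (p : Fin (n + 1) → ℕ) (hp : ∀ i, 0 < p i)
    (y : Lgroup n p) :
    ∃! q : ℤ × (Fin (n + 1) → ℤ),
      (∀ i, 0 ≤ q.2 i ∧ q.2 i < (p i : ℤ)) ∧
        y = q.1 • Lc n p + ∑ i : Fin (n + 1), q.2 i • Lx n p i := by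
  have hp' : ∀ i, (0 : ℤ) < (p i : ℤ) := fun i => Int.natCast_pos.mpr (hp i)
  obtain ⟨a, rfl⟩ := Lx_span y
  refine ⟨(∑ i, a i / p i, fun i => a i % p i), ⟨?_, ?_⟩, ?_⟩
  · exact fun i => ⟨Int.emod_nonneg _ (hp' i).ne', Int.emod_lt_of_pos _ (hp' i)⟩
  · calc ∑ i, a i • Lx n p i
        = ∑ i, ((a i / p i) • Lc n p + (a i % p i) • Lx n p i) := by
          refine Finset.sum_congr rfl fun i _ => ?_
          rw [← smul_Lx i, smul_smul, ← add_smul]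
          congr 1
          rw [mul_comm]
          exact (Int.mul_ediv_add_emod (a i) (p i)).symm
      _ = (∑ i, a i / p i) • Lc n p + ∑ i, (a i % p i) • Lx n p i := by
          rw [Finset.sum_add_distrib, ← Finset.sum_smul]
  · rintro ⟨m, l⟩ ⟨hb, he⟩
    refine normal_form_unique hp (m, l) _ hb
      (fun i => ⟨Int.emod_nonneg _ (hp' i).ne', Int.emod_lt_of_pos _ (hp' i)⟩) ?_
    rw [← he]
    calc ∑ i, a i • Lx n p i
        = ∑ i, ((a i / p i) • Lc n p + (a i % p i) • Lx n p i) := by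
          refine Finset.sum_congr rfl fun i _ => ?_
          rw [← smul_Lx i, smul_smul, ← add_smul]
          congr 1
          rw [mul_comm]
          exact (Int.mul_ediv_add_emod (a i) (p i)).symm
      _ = (∑ i, a i / p i) • Lc n p + ∑ i, (a i % p i) • Lx n p i := by
          rw [Finset.sum_add_distrib, ← Finset.sum_smul]
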